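/- Let G be a graph with a 4-cycle x–u–y–v where d(u) = d(v) = 2 and d(x) = 3 with N(x) = {u, v, p}. Let L be a list assignment with |L(z)| = d(z) + 2 for all z, and let φ be a proper conflict-free L-coloring of G − v. Then φ extends to a proper conflict-free L-coloring of G: coloring v with any color in L(v) \ {φ(x), φ(y), β}, where β ∈ U_φ(y, G−v), yields such a coloring. -/

import Mathlib

/-- A proper conflict-free coloring of `G`. -/
def IsPCF {V β : Type*} (G : SimpleGraph V) (φ : V → β) : Prop :=
  (∀ ⦃a b : V⦄, G.Adj a b → φ a ≠ φ b) ∧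
  ∀ v : V, (∃ u, G.Adj v u) → ∃ c : β, ∃! u : V, G.Adj v u ∧ φ u = c

/-- A proper conflict-free coloring from the lists `L`. -/
def IsPCFList {V : Type*} (G : SimpleGraph V) (L : V → Finset ℕ) (φ : V → ℕ) : Prop :=
  (∀ v, φ v ∈ L v) ∧ IsPCF G φ

/-- The graph obtained from `G` by deleting the vertices in `S`
(kept on the same vertex type; deleted vertices become isolated). -/
def delVerts {V : Type*} (G : SimpleGraph V) (S : Set V) : SimpleGraph V where
  Adj a b := G.Adj a b ∧ a ∉ S ∧ b ∉ S
  symm := by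
    constructor
    intro a b h
    exact ⟨h.1.symm, h.2.2, h.2.1⟩
  loopless := by
    constructor
    intro a h
    exact G.loopless.irrefl a h.1

/-- `Uset G φ v` is the set of colors appearing exactly once in the open
neighborhood of `v` in `G` under the coloring `φ`. -/
def Uset {V : Type*} (G : SimpleGraph V) (φ : V → ℕ) (v : V) : Set ℕ :=
  {c | ∃! u : V, G.Adj v u ∧ φ u = c}

/-- A 4-cycle `x–u–y–v` with `d(u) = d(v) = 2`, `d(x) = 3`, `N(x) = {u, v, p}`:
any PCF coloring `φ` of `G - v` extends to `G`; indeed coloring `v` with any color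
of `L(v)` avoiding `φ(x)`, `φ(y)` and a uniquely-occurring color `β` at `y` works. -/
theorem stmt14 {V : Type*} [Fintype V] [DecidableEq V] (G : SimpleGraph V)
    [DecidableRel G.Adj] (x u y v p : V) (L : V → Finset ℕ) (φ : V → ℕ)
    (hxu : G.Adj x u) (huy : G.Adj u y) (hyv : G.Adj y v) (hvx : G.Adj v x)
    (hxp : G.Adj x p) (hpu : p ≠ u) (hpv : p ≠ v) (hxy : x ≠ y) (huv : u ≠ v)
    (hdu : G.degree u = 2) (hdv : G.degree v = 2) (hdx : G.degree x = 3)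
    (hL : ∀ z, (L z).card = G.degree z + 2)
    (hφ : IsPCF (delVerts G {v}) φ)
    (hφL : ∀ z, z ≠ v → φ z ∈ L z) :
    (∃ ψ : V → ℕ, (∀ z, z ≠ v → ψ z = φ z) ∧ IsPCFList G L ψ) ∧
    (∀ β c : ℕ, β ∈ Uset (delVerts G {v}) φ y → c ∈ L v →
      c ≠ φ x → c ≠ φ y → c ≠ β →
      IsPCFList G L (Function.update φ v c)) := by
  have hxv' : x ≠ v := hvx.ne'
  have hyv' : y ≠ v := hyv.ne
  -- neighborhood characterizations
  have hNv : ∀ w, G.Adj v w ↔ w = x ∨ w = y := by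
    have hsub : ({x, y} : Finset V) ⊆ G.neighborFinset v := by
      intro w hw
      rw [Finset.mem_insert, Finset.mem_singleton] at hw
      rcases hw with rfl | rfl
      · exact (G.mem_neighborFinset _ _).2 hvx
      · exact (G.mem_neighborFinset _ _).2 hyv.symm
    have hcard : (G.neighborFinset v).card ≤ ({x, y} : Finset V).card := by
      rw [G.card_neighborFinset_eq_degree, hdv,
        Finset.card_insert_of_notMem (by simpa using hxy), Finset.card_singleton]
    have heq := Finset.eq_of_subset_of_card_le hsub hcard
    intro w
    rw [← G.mem_neighborFinset, heq.symm]
    simp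
  have hNu : ∀ w, G.Adj u w ↔ w = x ∨ w = y := by
    have hsub : ({x, y} : Finset V) ⊆ G.neighborFinset u := by
      intro w hw
      rw [Finset.mem_insert, Finset.mem_singleton] at hw
      rcases hw with rfl | rfl
      · exact (G.mem_neighborFinset _ _).2 hxu.symm
      · exact (G.mem_neighborFinset _ _).2 huy
    have hcard : (G.neighborFinset u).card ≤ ({x, y} : Finset V).card := by
      rw [G.card_neighborFinset_eq_degree, hdu,
        Finset.card_insert_of_notMem (by simpa using hxy), Finset.card_singleton]
    have heq := Finset.eq_of_subset_of_card_le hsub hcard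
    intro w
    rw [← G.mem_neighborFinset, heq.symm]
    simp
  have hNx : ∀ w, G.Adj x w ↔ w = u ∨ w = v ∨ w = p := by
    have hupv : ({u, v, p} : Finset V).card = 3 := by
      rw [Finset.card_insert_of_notMem (by simp [huv, Ne.symm hpu]),
        Finset.card_insert_of_notMem (by simp [Ne.symm hpv]),
        Finset.card_singleton]
    have hsub : ({u, v, p} : Finset V) ⊆ G.neighborFinset x := by
      intro w hw
      simp only [Finset.mem_insert, Finset.mem_singleton] at hw
      rcases hw with rfl | rfl | rfl
      · exact (G.mem_neighborFinset _ _).2 hxu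
      · exact (G.mem_neighborFinset _ _).2 hvx.symm
      · exact (G.mem_neighborFinset _ _).2 hxp
    have hcard : (G.neighborFinset x).card ≤ ({u, v, p} : Finset V).card := by
      rw [G.card_neighborFinset_eq_degree, hdx, hupv]
    have heq := Finset.eq_of_subset_of_card_le hsub hcard
    intro w
    rw [← G.mem_neighborFinset, heq.symm]
    simp
  -- some adjacencies in G - v
  have hadjux : (delVerts G {v}).Adj u x := ⟨hxu.symm, by simpa using huv, by simpa using hxv'⟩
  have hadjuy : (delVerts G {v}).Adj u y := ⟨huy, by simpa using huv, by simpa using hyv'⟩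
  have hadjxu : (delVerts G {v}).Adj x u := ⟨hxu, by simpa using hxv', by simpa using huv⟩
  have hadjxp : (delVerts G {v}).Adj x p := ⟨hxp, by simpa using hxv', by simpa using hpv⟩
  have hφxy : φ x ≠ φ y := by
    intro hcon
    obtain ⟨c0, w0, ⟨hadj0, hc0⟩, huniq0⟩ := hφ.2 u ⟨x, hadjux⟩
    have hc0' : φ x = c0 := by
      rcases (hNu w0).1 hadj0.1 with rfl | rfl
      · exact hc0
      · exact hcon.trans hc0
    have h1 := huniq0 x ⟨hadjux, hc0'⟩
    have h2 := huniq0 y ⟨hadjuy, hcon.symm.trans hc0'⟩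
    exact hxy (h1.trans h2.symm)
  have hφup : φ u ≠ φ p := by
    intro hcon
    obtain ⟨c0, w0, ⟨hadj0, hc0⟩, huniq0⟩ := hφ.2 x ⟨u, hadjxu⟩
    have hw0v : w0 ≠ v := by have := hadj0.2.2; simpa using this
    have hc0' : φ u = c0 := by
      rcases (hNx w0).1 hadj0.1 with rfl | rfl | rfl
      · exact hc0
      · exact absurd rfl hw0v
      · exact hcon.trans hc0
    have h1 := huniq0 u ⟨hadjxu, hc0'⟩
    have h2 := huniq0 p ⟨hadjxp, hcon.symm.trans hc0'⟩
    exact hpu (h2.trans h1.symm)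
  -- the main extension lemma
  have main : ∀ β c : ℕ, β ∈ Uset (delVerts G {v}) φ y → c ∈ L v →
      c ≠ φ x → c ≠ φ y → c ≠ β → IsPCFList G L (Function.update φ v c) := by
    intro β c hβ hcL hcx hcy hcβ
    have hψv : Function.update φ v c v = c := Function.update_self v c φ
    have hψ : ∀ z, z ≠ v → Function.update φ v c z = φ z := fun z hz =>
      Function.update_of_ne hz c φ
    simp only [Uset, Set.mem_setOf_eq] at hβ
    refine ⟨?_, ?_, ?_⟩
    · intro z
      by_cases hz : z = v
      · subst hz; rwa [hψv]
      · rw [hψ z hz]; exact hφL z hz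
    · -- properness
      intro a b hab
      by_cases ha : a = v
      · subst ha
        rcases (hNv b).1 hab with h | h
        · rw [h, hψv, hψ x hxv']; exact hcx
        · rw [h, hψv, hψ y hyv']; exact hcy
      · by_cases hb : b = v
        · subst hb
          rcases (hNv a).1 hab.symm with h | h
          · rw [h, hψ x hxv', hψv]; exact fun h' => hcx h'.symm
          · rw [h, hψ y hyv', hψv]; exact fun h' => hcy h'.symm
        · rw [hψ a ha, hψ b hb]
          exact hφ.1 ⟨hab, by simpa using ha, by simpa using hb⟩
    · -- conflict-freeness
      intro w hw
      by_cases hwv : w = v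
      · subst hwv
        refine ⟨φ x, x, ⟨hvx, hψ x hxv'⟩, ?_⟩
        rintro z ⟨hz, hzc⟩
        rcases (hNv z).1 hz with h | h
        · exact h
        · rw [h, hψ y hyv'] at hzc; exact absurd hzc.symm hφxy
      · by_cases hwu : w = u
        · subst hwu
          refine ⟨φ x, x, ⟨hxu.symm, hψ x hxv'⟩, ?_⟩
          rintro z ⟨hz, hzc⟩
          rcases (hNu z).1 hz with h | h
          · exact h
          · rw [h, hψ y hyv'] at hzc; exact absurd hzc.symm hφxy
        · by_cases hwy : w = y
          · subst hwy
            obtain ⟨w0, ⟨hadj0, hc0⟩, huniq0⟩ := hβ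
            have hw0v : w0 ≠ v := by have := hadj0.2.2; simpa using this
            refine ⟨β, w0, ⟨hadj0.1, (hψ w0 hw0v).trans hc0⟩, ?_⟩
            rintro z ⟨hz, hzc⟩
            have hzv : z ≠ v := by
              rintro rfl
              rw [hψv] at hzc; exact hcβ hzc
            exact huniq0 z ⟨⟨hz, by simpa using hyv', by simpa using hzv⟩,
              (hψ z hzv).symm.trans hzc⟩
          · by_cases hwx : w = x
            · subst hwx
              by_cases hcu : c = φ u
              · refine ⟨φ p, p, ⟨hxp, hψ p hpv⟩, ?_⟩
                rintro z ⟨hz, hzc⟩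
                rcases (hNx z).1 hz with h | h | h
                · rw [h, hψ u huv] at hzc; exact absurd hzc hφup
                · rw [h, hψv] at hzc; exact absurd (hcu.symm.trans hzc) hφup
                · exact h
              · refine ⟨φ u, u, ⟨hxu, hψ u huv⟩, ?_⟩
                rintro z ⟨hz, hzc⟩
                rcases (hNx z).1 hz with h | h | h
                · exact h
                · rw [h, hψv] at hzc; exact absurd hzc hcu
                · rw [h, hψ p hpv] at hzc; exact absurd hzc.symm hφup
            · -- generic vertex
              obtain ⟨z, hz⟩ := hw
              have hadjnv : ∀ z', G.Adj w z' → z' ≠ v := by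
                rintro z' hz' rfl
                rcases (hNv w).1 hz'.symm with rfl | rfl
                · exact hwx rfl
                · exact hwy rfl
              have hzv := hadjnv z hz
              obtain ⟨c0, w0, ⟨hadj0, hc0⟩, huniq0⟩ :=
                hφ.2 w ⟨z, ⟨hz, by simpa using hwv, by simpa using hzv⟩⟩
              have hw0v : w0 ≠ v := by have := hadj0.2.2; simpa using this
              refine ⟨c0, w0, ⟨hadj0.1, (hψ w0 hw0v).trans hc0⟩, ?_⟩
              rintro z' ⟨hz', hzc'⟩
              have hz'v := hadjnv z' hz'
              exact huniq0 z' ⟨⟨hz', by simpa using hwv, by simpa using hz'v⟩,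
                (hψ z' hz'v).symm.trans hzc'⟩
  refine ⟨?_, main⟩
  have hadjyu : (delVerts G {v}).Adj y u := ⟨huy.symm, by simpa using hyv', by simpa using huv⟩
  obtain ⟨β, hβ⟩ := hφ.2 y ⟨u, hadjyu⟩
  have hβU : β ∈ Uset (delVerts G {v}) φ y := hβ
  have h4 : (L v).card = 4 := by rw [hL v, hdv]
  have hcard3 : ({φ x, φ y, β} : Finset ℕ).card ≤ 3 := by
    have h1 := Finset.card_insert_le (φ x) ({φ y, β} : Finset ℕ)
    have h2 := Finset.card_insert_le (φ y) ({β} : Finset ℕ)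
    simp only [Finset.card_singleton] at h2
    omega
  have hne : (L v \ {φ x, φ y, β}).Nonempty := by
    rw [← Finset.card_pos]
    have := Finset.le_card_sdiff ({φ x, φ y, β} : Finset ℕ) (L v)
    omega
  obtain ⟨c, hc⟩ := hne
  rw [Finset.mem_sdiff] at hc
  simp only [Finset.mem_insert, Finset.mem_singleton, not_or] at hc
  obtain ⟨hcL, hcx, hcy, hcβ⟩ := hc
  refine ⟨Function.update φ v c, ?_, main β c hβU hcL hcx hcy hcβ⟩
  intro z hz
  exact Function.update_of_ne hz c φ
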